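/- Let W₁, W₂, W₃ be vector spaces over ℂ with linear operators L₀⁽¹⁾ on W₁, L₀⁽²⁾ on W₂, L₀⁽³⁾ on W₃ and L₋₁ on W₁, and let μ_{n;k} : W₁ × W₂ → W₃ (n, k ∈ ℂ) be a family of bilinear maps satisfying the L(−1)-derivative property and the L(0)-bracket relation. Then for all a, b ∈ ℂ, t ∈ ℕ, all n, k ∈ ℂ, and all w₁ ∈ W₁, w₂ ∈ W₂: (L₀⁽³⁾ − a − b + n + 1)^t (μ_{n;k}(w₁, w₂)) = t! · Σ_{i,j,l ∈ ℕ, i+j+l=t} (C(k+l, l)/(i!·j!)) · μ_{n;k+l}((L₀⁽¹⁾ − a)^i w₁, (L₀⁽²⁾ − b)^j w₂), where C(k+l, l) := (k+l)(k+l−1)⋯(k+1)/l! is the generalized binomial coefficient. -/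

import Mathlib

/-- The generalized binomial coefficient `C(α, l) = α(α−1)⋯(α−l+1)/l!`. -/
noncomputable def cbinom (α : ℂ) (l : ℕ) : ℂ :=
  (∏ i ∈ Finset.range l, (α - (i : ℂ))) / (l.factorial : ℂ)

lemma cbinom_succ_mul (α : ℂ) (l : ℕ) :
    ((l : ℂ) + 1) * cbinom (α + 1) (l + 1) = (α + 1) * cbinom α l := by
  unfold cbinom
  rw [Finset.prod_range_succ']
  have h1 : ∏ i ∈ Finset.range l, (α + 1 - ((i + 1 : ℕ) : ℂ))
      = ∏ i ∈ Finset.range l, (α - (i : ℂ)) := by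
    apply Finset.prod_congr rfl; intro i _; push_cast; ring
  rw [h1, Nat.factorial_succ]
  have hl : ((l.factorial : ℂ)) ≠ 0 := Nat.cast_ne_zero.mpr (Nat.factorial_pos l).ne'
  have hl1 : ((l : ℂ) + 1) ≠ 0 := by
    have : (((l + 1) : ℕ) : ℂ) ≠ 0 := Nat.cast_ne_zero.mpr (Nat.succ_ne_zero l)
    push_cast at this; exact this
  push_cast
  field_simp
  ring

section shifts

variable {M : Type*} [AddCommGroup M] [Module ℂ M]

lemma shiftI (t : ℕ) (c : ℕ → ℕ → ℕ → ℂ) (G : ℕ → ℕ → ℕ → M)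
    (hc : ∀ (i j l : ℕ), ((i : ℂ) + 1) * c (i + 1) j l = c i j l) :
    ∑ p ∈ Finset.HasAntidiagonal.antidiagonal (t + 1), ∑ q ∈ Finset.HasAntidiagonal.antidiagonal p.2,
        ((p.1 : ℂ) * c p.1 q.1 q.2) • G p.1 q.1 q.2
      = ∑ p ∈ Finset.HasAntidiagonal.antidiagonal t, ∑ q ∈ Finset.HasAntidiagonal.antidiagonal p.2,
          (c p.1 q.1 q.2) • G (p.1 + 1) q.1 q.2 := by
  rw [Finset.Nat.sum_antidiagonal_succ]
  simp only [Nat.cast_zero, zero_mul, zero_smul, Finset.sum_const_zero, zero_add]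
  apply Finset.sum_congr rfl; intro p _
  apply Finset.sum_congr rfl; intro q _
  rw [show ((p.1 + 1 : ℕ) : ℂ) = (p.1 : ℂ) + 1 by push_cast; ring, hc]

lemma shiftJ (t : ℕ) (c : ℕ → ℕ → ℕ → ℂ) (G : ℕ → ℕ → ℕ → M)
    (hc : ∀ (i j l : ℕ), ((j : ℂ) + 1) * c i (j + 1) l = c i j l) :
    ∑ p ∈ Finset.HasAntidiagonal.antidiagonal (t + 1), ∑ q ∈ Finset.HasAntidiagonal.antidiagonal p.2,
        ((q.1 : ℂ) * c p.1 q.1 q.2) • G p.1 q.1 q.2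
      = ∑ p ∈ Finset.HasAntidiagonal.antidiagonal t, ∑ q ∈ Finset.HasAntidiagonal.antidiagonal p.2,
          (c p.1 q.1 q.2) • G p.1 (q.1 + 1) q.2 := by
  rw [Finset.Nat.sum_antidiagonal_succ']
  simp only [Finset.Nat.antidiagonal_zero, Finset.sum_singleton, Nat.cast_zero, zero_mul,
    zero_smul, zero_add]
  apply Finset.sum_congr rfl; intro p _
  rw [Finset.Nat.sum_antidiagonal_succ]
  simp only [Nat.cast_zero, zero_mul, zero_smul, zero_add]
  apply Finset.sum_congr rfl; intro q _
  rw [show ((q.1 + 1 : ℕ) : ℂ) = (q.1 : ℂ) + 1 by push_cast; ring, hc]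

lemma shiftL (t : ℕ) (c d : ℕ → ℕ → ℕ → ℂ) (G : ℕ → ℕ → ℕ → M)
    (hc : ∀ (i j l : ℕ), ((l : ℂ) + 1) * c i j (l + 1) = d i j l) :
    ∑ p ∈ Finset.HasAntidiagonal.antidiagonal (t + 1), ∑ q ∈ Finset.HasAntidiagonal.antidiagonal p.2,
        ((q.2 : ℂ) * c p.1 q.1 q.2) • G p.1 q.1 q.2
      = ∑ p ∈ Finset.HasAntidiagonal.antidiagonal t, ∑ q ∈ Finset.HasAntidiagonal.antidiagonal p.2,
          (d p.1 q.1 q.2) • G p.1 q.1 (q.2 + 1) := by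
  rw [Finset.Nat.sum_antidiagonal_succ']
  simp only [Finset.Nat.antidiagonal_zero, Finset.sum_singleton, Nat.cast_zero, zero_mul,
    zero_smul, zero_add]
  apply Finset.sum_congr rfl; intro p _
  rw [Finset.Nat.sum_antidiagonal_succ']
  simp only [Nat.cast_zero, zero_mul, zero_smul, zero_add]
  apply Finset.sum_congr rfl; intro q _
  rw [show ((q.2 + 1 : ℕ) : ℂ) = (q.2 : ℂ) + 1 by push_cast; ring, hc]

end shifts

/-- Formula (3.34) of Lemma 3.22: for a family of bilinear maps `μ n k : W₁ × W₂ → W₃`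
satisfying the L(−1)-derivative property and the L(0)-bracket relation,
`(L(0) − a − b + n + 1)^t μ_{n;k}(w₁,w₂)
  = t! Σ_{i+j+l=t} (C(k+l,l)/(i!j!)) μ_{n;k+l}((L(0)−a)^i w₁, (L(0)−b)^j w₂)`. -/
theorem stmt9 {W₁ W₂ W₃ : Type*} [AddCommGroup W₁] [Module ℂ W₁]
    [AddCommGroup W₂] [Module ℂ W₂] [AddCommGroup W₃] [Module ℂ W₃]
    (L01 : Module.End ℂ W₁) (L02 : Module.End ℂ W₂) (L03 : Module.End ℂ W₃)
    (Lm1 : Module.End ℂ W₁)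
    (μ : ℂ → ℂ → W₁ →ₗ[ℂ] W₂ →ₗ[ℂ] W₃)
    (hderiv : ∀ (n k : ℂ) (w₁ : W₁) (w₂ : W₂),
      μ n k (Lm1 w₁) w₂ = (-n) • μ (n - 1) k w₁ w₂ + (k + 1) • μ (n - 1) (k + 1) w₁ w₂)
    (hbr : ∀ (n k : ℂ) (w₁ : W₁) (w₂ : W₂),
      L03 (μ n k w₁ w₂) - μ n k w₁ (L02 w₂)
        = μ n k (L01 w₁) w₂ + μ (n + 1) k (Lm1 w₁) w₂)
    (w₁ : W₁) (w₂ : W₂) (a b : ℂ) (t : ℕ) (n k : ℂ) :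
    ((L03 - (a + b - n - 1) • 1) ^ t) (μ n k w₁ w₂)
      = (t.factorial : ℂ) •
          ∑ p ∈ Finset.HasAntidiagonal.antidiagonal t, ∑ q ∈ Finset.HasAntidiagonal.antidiagonal p.2,
            (cbinom (k + (q.2 : ℂ)) q.2 / ((p.1.factorial : ℂ) * (q.1.factorial : ℂ))) •
              μ n (k + (q.2 : ℂ)) (((L01 - a • 1) ^ p.1) w₁) (((L02 - b • 1) ^ q.1) w₂) := by
  set f : Module.End ℂ W₃ := L03 - (a + b - n - 1) • 1 with hf
  set G : ℕ → ℕ → ℕ → W₃ := fun i j l =>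
    μ n (k + (l : ℂ)) (((L01 - a • 1) ^ i) w₁) (((L02 - b • 1) ^ j) w₂) with hG
  set c : ℕ → ℕ → ℕ → ℂ := fun i j l =>
    cbinom (k + (l : ℂ)) l / ((i.factorial : ℂ) * (j.factorial : ℂ)) with hc
  have fact_ne : ∀ m : ℕ, (m.factorial : ℂ) ≠ 0 := fun m =>
    Nat.cast_ne_zero.mpr (Nat.factorial_pos m).ne'
  -- single application step
  have step : ∀ i j l, f (G i j l)
      = G (i + 1) j l + G i (j + 1) l + (k + (l : ℂ) + 1) • G i j (l + 1) := by
    intro i j l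
    set κ : ℂ := k + (l : ℂ) with hκ
    set u : W₁ := ((L01 - a • 1) ^ i) w₁ with hu
    set v : W₂ := ((L02 - b • 1) ^ j) w₂ with hv
    have hL3 : L03 (μ n κ u v)
        = μ n κ (L01 u) v + μ (n + 1) κ (Lm1 u) v + μ n κ u (L02 v) := by
      have h := hbr n κ u v
      rw [sub_eq_iff_eq_add] at h
      rw [h]
    have hd : μ (n + 1) κ (Lm1 u) v
        = (-(n + 1)) • μ n κ u v + (κ + 1) • μ n (κ + 1) u v := by
      simpa using hderiv (n + 1) κ u v
    have hGi : G (i + 1) j l = μ n κ (L01 u) v - a • μ n κ u v := by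
      simp only [hG, pow_succ', Module.End.mul_apply, ← hu, ← hv, ← hκ]
      simp [LinearMap.sub_apply, LinearMap.smul_apply, map_sub, map_smul]
    have hGj : G i (j + 1) l = μ n κ u (L02 v) - b • μ n κ u v := by
      simp only [hG, pow_succ', Module.End.mul_apply, ← hu, ← hv, ← hκ]
      simp [LinearMap.sub_apply, LinearMap.smul_apply, map_sub, map_smul]
    have hGl : G i j (l + 1) = μ n (κ + 1) u v := by
      have hcast : (k + ((l + 1 : ℕ) : ℂ)) = κ + 1 := by rw [hκ]; push_cast; ring
      simp only [hG, hcast, ← hu, ← hv, ← hκ]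
    have hfx : f (G i j l) = L03 (μ n κ u v) - (a + b - n - 1) • μ n κ u v := by
      simp only [hG, ← hu, ← hv, ← hκ, hf, LinearMap.sub_apply, LinearMap.smul_apply,
        Module.End.one_apply]
    rw [hfx, hL3, hd, hGi, hGj, hGl]
    module
  -- coefficient recursions
  have hcI : ∀ (i j l : ℕ), ((i : ℂ) + 1) * c (i + 1) j l = c i j l := by
    intro i j l
    have h1 := fact_ne i; have h2 := fact_ne j
    simp only [hc, Nat.factorial_succ]
    push_cast
    have h3 : ((i : ℂ) + 1) ≠ 0 := by
      have : (((i + 1) : ℕ) : ℂ) ≠ 0 := Nat.cast_ne_zero.mpr (Nat.succ_ne_zero i)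
      push_cast at this; exact this
    field_simp
  have hcJ : ∀ (i j l : ℕ), ((j : ℂ) + 1) * c i (j + 1) l = c i j l := by
    intro i j l
    have h1 := fact_ne i; have h2 := fact_ne j
    simp only [hc, Nat.factorial_succ]
    push_cast
    have h3 : ((j : ℂ) + 1) ≠ 0 := by
      have : (((j + 1) : ℕ) : ℂ) ≠ 0 := Nat.cast_ne_zero.mpr (Nat.succ_ne_zero j)
      push_cast at this; exact this
    field_simp
  have hcL : ∀ (i j l : ℕ), ((l : ℂ) + 1) * c i j (l + 1) = (k + (l : ℂ) + 1) * c i j l := by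
    intro i j l
    simp only [hc]
    have hcast : (k + ((l + 1 : ℕ) : ℂ)) = (k + (l : ℂ)) + 1 := by push_cast; ring
    rw [hcast]
    have h := cbinom_succ_mul (k + (l : ℂ)) l
    have h1 := fact_ne i; have h2 := fact_ne j
    field_simp
    linear_combination h
  -- main induction
  have key : ∀ s : ℕ, (f ^ s) (G 0 0 0)
      = (s.factorial : ℂ) • ∑ p ∈ Finset.HasAntidiagonal.antidiagonal s, ∑ q ∈ Finset.HasAntidiagonal.antidiagonal p.2,
          c p.1 q.1 q.2 • G p.1 q.1 q.2 := by
    intro s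
    induction s with
    | zero =>
      simp [hc, cbinom]
    | succ s ih =>
      rw [pow_succ', Module.End.mul_apply, ih, map_smul, map_sum]
      simp only [map_sum, map_smul]
      have expand : ∑ p ∈ Finset.HasAntidiagonal.antidiagonal s, ∑ q ∈ Finset.HasAntidiagonal.antidiagonal p.2,
            c p.1 q.1 q.2 • f (G p.1 q.1 q.2)
          = (∑ p ∈ Finset.HasAntidiagonal.antidiagonal s, ∑ q ∈ Finset.HasAntidiagonal.antidiagonal p.2,
              c p.1 q.1 q.2 • G (p.1 + 1) q.1 q.2)
            + (∑ p ∈ Finset.HasAntidiagonal.antidiagonal s, ∑ q ∈ Finset.HasAntidiagonal.antidiagonal p.2,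
              c p.1 q.1 q.2 • G p.1 (q.1 + 1) q.2)
            + (∑ p ∈ Finset.HasAntidiagonal.antidiagonal s, ∑ q ∈ Finset.HasAntidiagonal.antidiagonal p.2,
              ((k + (q.2 : ℂ) + 1) * c p.1 q.1 q.2) • G p.1 q.1 (q.2 + 1)) := by
        rw [← Finset.sum_add_distrib, ← Finset.sum_add_distrib]
        apply Finset.sum_congr rfl; intro p _
        rw [← Finset.sum_add_distrib, ← Finset.sum_add_distrib]
        apply Finset.sum_congr rfl; intro q _
        rw [step p.1 q.1 q.2, smul_add, smul_add, smul_smul, mul_comm]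
      rw [expand, ← shiftI s c G hcI, ← shiftJ s c G hcJ,
        ← shiftL s c (fun i j l => (k + (l : ℂ) + 1) * c i j l) G hcL,
        ← Finset.sum_add_distrib, ← Finset.sum_add_distrib]
      have combine : ∀ p ∈ Finset.HasAntidiagonal.antidiagonal (s + 1),
          ((∑ q ∈ Finset.HasAntidiagonal.antidiagonal p.2, ((p.1 : ℂ) * c p.1 q.1 q.2) • G p.1 q.1 q.2)
            + (∑ q ∈ Finset.HasAntidiagonal.antidiagonal p.2, ((q.1 : ℂ) * c p.1 q.1 q.2) • G p.1 q.1 q.2)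
            + (∑ q ∈ Finset.HasAntidiagonal.antidiagonal p.2, ((q.2 : ℂ) * c p.1 q.1 q.2) • G p.1 q.1 q.2))
          = ((s : ℂ) + 1) • ∑ q ∈ Finset.HasAntidiagonal.antidiagonal p.2, c p.1 q.1 q.2 • G p.1 q.1 q.2 := by
        intro p hp
        rw [Finset.smul_sum, ← Finset.sum_add_distrib, ← Finset.sum_add_distrib]
        apply Finset.sum_congr rfl; intro q hq
        have h1 : p.1 + p.2 = s + 1 := Finset.HasAntidiagonal.mem_antidiagonal.mp hp
        have h2 : q.1 + q.2 = p.2 := Finset.HasAntidiagonal.mem_antidiagonal.mp hq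
        have hcast : (p.1 : ℂ) + (q.1 : ℂ) + (q.2 : ℂ) = (s : ℂ) + 1 := by
          have hn : ((p.1 + q.1 + q.2 : ℕ) : ℂ) = ((s + 1 : ℕ) : ℂ) := by
            congr 1; omega
          push_cast at hn
          exact hn
        rw [smul_smul, ← add_smul, ← add_smul, ← add_mul, ← add_mul, hcast]
      rw [Finset.sum_congr rfl combine, ← Finset.smul_sum, smul_smul, Nat.factorial_succ]
      congr 1
      push_cast
      ring
  have hG000 : μ n k w₁ w₂ = G 0 0 0 := by
    simp [hG]
  rw [hG000, key t]
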